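/- Robbins–Siegmund almost-supermartingale theorem: let (X_k), (Y_k), (Z_k) be nonnegative random variables adapted to a filtration (F_k), and (η_k) a nonnegative real sequence with Σ η_k < ∞. If almost surely E[Y_{k+1} | F_k] ≤ (1 + η_k) Y_k − X_k + Z_k for all k and Σ Z_k < ∞ almost surely, then Σ X_k < ∞ almost surely and Y_k converges almost surely. -/

import Mathlib

open MeasureTheory Filter Topology
open scoped ENNReal BigOperators

namespace RSaux

variable {Ω : Type*}

noncomputable def alph (η : ℕ → ℝ) (k : ℕ) : ℝ := ∏ j ∈ Finset.range k, (1 + η j)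

open Classical in
noncomputable def W (V : ℕ → Ω → ℝ) (G : ℕ → Ω → ℝ) (c : ℝ) : ℕ → Ω → ℝ
  | 0 => V 0
  | (k+1) => fun ω => if G k ω ≤ c then V (k+1) ω else W V G c k ω

lemma W_succ (V G : ℕ → Ω → ℝ) (c : ℝ) (k : ℕ) :
    W V G c (k+1) = {ω | G k ω ≤ c}.indicator (V (k+1))
      + {ω | G k ω ≤ c}ᶜ.indicator (W V G c k) := by
  funext ω
  by_cases h : G k ω ≤ c <;>
    simp [W, h, Set.indicator_apply, Set.mem_setOf_eq]

lemma W_eq (V G : ℕ → Ω → ℝ) (c : ℝ) :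
    ∀ k ω, (∀ j, j < k → G j ω ≤ c) → W V G c k ω = V k ω := by
  intro k
  induction k with
  | zero => intro ω _; rfl
  | succ k _ =>
    intro ω h
    simp [W, h k (Nat.lt_succ_self k)]

end RSaux

open RSaux

theorem stmt6_robbins_siegmund
    {Ω : Type*} {m0 : MeasurableSpace Ω} (μ : Measure Ω) [IsProbabilityMeasure μ]
    (ℱ : MeasureTheory.Filtration ℕ m0)
    (X Y Z : ℕ → Ω → ℝ) (η : ℕ → ℝ)
    (hXnn : ∀ k, 0 ≤ X k) (hYnn : ∀ k, 0 ≤ Y k) (hZnn : ∀ k, 0 ≤ Z k)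
    (hXadp : MeasureTheory.Adapted ℱ X) (hYadp : MeasureTheory.Adapted ℱ Y)
    (hZadp : MeasureTheory.Adapted ℱ Z)
    (hXint : ∀ k, Integrable (X k) μ) (hYint : ∀ k, Integrable (Y k) μ)
    (hZint : ∀ k, Integrable (Z k) μ)
    (hηnn : ∀ k, 0 ≤ η k) (hηsum : Summable η)
    (hrec : ∀ k, ∀ᵐ ω ∂μ,
      (μ[Y (k + 1) | ℱ k]) ω ≤ (1 + η k) * Y k ω - X k ω + Z k ω)
    (hZsum : ∀ᵐ ω ∂μ, Summable (fun k => Z k ω)) :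
    ∀ᵐ ω ∂μ, Summable (fun k => X k ω) ∧
      ∃ l : ℝ, Tendsto (fun k => Y k ω) atTop (nhds l) := by
  classical
  -- deterministic facts about alph
  have hα1 : ∀ k, 1 ≤ alph η k := fun k => by
    unfold alph
    calc (1:ℝ) = ∏ _j ∈ Finset.range k, 1 := by simp
      _ ≤ ∏ j ∈ Finset.range k, (1 + η j) :=
        Finset.prod_le_prod (by intros; norm_num) (by intro j _; linarith [hηnn j])
  have hαpos : ∀ k, 0 < alph η k := fun k => lt_of_lt_of_le one_pos (hα1 k)
  have hαsucc : ∀ k, alph η (k+1) = alph η k * (1 + η k) := fun k =>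
    Finset.prod_range_succ _ _
  have hαmono : Monotone (alph η) := monotone_nat_of_le_succ (fun k => by
    rw [hαsucc k]; nlinarith [hαpos k, hηnn k])
  have hαle : ∀ k, alph η k ≤ Real.exp (∑' j, η j) := by
    intro k
    unfold alph
    calc (∏ j ∈ Finset.range k, (1 + η j)) ≤ ∏ j ∈ Finset.range k, Real.exp (η j) :=
          Finset.prod_le_prod (fun j _ => by linarith [hηnn j])
            (fun j _ => by linarith [Real.add_one_le_exp (η j)])
      _ = Real.exp (∑ j ∈ Finset.range k, η j) := by rw [Real.exp_sum]
      _ ≤ Real.exp (∑' j, η j) := Real.exp_le_exp.2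
          (Summable.sum_le_tsum _ (fun j _ => hηnn j) hηsum)
  have hαlim : ∃ αl : ℝ, 1 ≤ αl ∧ Tendsto (alph η) atTop (𝓝 αl) := by
    have hbdd : BddAbove (Set.range (alph η)) :=
      ⟨Real.exp (∑' j, η j), by rintro x ⟨k, rfl⟩; exact hαle k⟩
    exact ⟨⨆ k, alph η k, le_trans (hα1 0) (le_ciSup hbdd 0),
      tendsto_atTop_ciSup hαmono hbdd⟩
  set A : ℝ := Real.exp (∑' j, η j) with hA
  -- the transformed processes
  set V : ℕ → Ω → ℝ := fun k ω => (alph η k)⁻¹ * Y k ω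
      + ∑ j ∈ Finset.range k, ((alph η (j+1))⁻¹ * X j ω - (alph η (j+1))⁻¹ * Z j ω)
    with hV
  set G : ℕ → Ω → ℝ := fun k ω => ∑ j ∈ Finset.range (k+1), (alph η (j+1))⁻¹ * Z j ω
    with hG
  have hVadp : ∀ k, StronglyMeasurable[ℱ k] (V k) := by
    intro k
    refine StronglyMeasurable.add (stronglyMeasurable_const.mul (hYadp k).stronglyMeasurable) ?_
    refine Finset.stronglyMeasurable_fun_sum _ (fun j hj => ?_)
    have hjk : j ≤ k := Nat.le_of_lt_succ (Nat.lt_succ_of_lt (Finset.mem_range.1 hj))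
    exact ((stronglyMeasurable_const.mul ((hXadp j).stronglyMeasurable.mono (ℱ.mono hjk))).sub
      (stronglyMeasurable_const.mul ((hZadp j).stronglyMeasurable.mono (ℱ.mono hjk))))
  have hVint : ∀ k, Integrable (V k) μ := by
    intro k
    refine Integrable.add ((hYint k).const_mul _) ?_
    refine integrable_finset_sum _ (fun j _ => ?_)
    exact ((hXint j).const_mul _).sub ((hZint j).const_mul _)
  have hVcond : ∀ k, μ[V (k+1) | ℱ k] ≤ᵐ[μ] V k := by
    intro k
    set g : Ω → ℝ := fun ω =>
      ∑ j ∈ Finset.range (k+1), ((alph η (j+1))⁻¹ * X j ω - (alph η (j+1))⁻¹ * Z j ω) with hg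
    have hgadp : StronglyMeasurable[ℱ k] g := by
      refine Finset.stronglyMeasurable_fun_sum _ (fun j hj => ?_)
      have hjk : j ≤ k := Nat.lt_succ_iff.1 (Finset.mem_range.1 hj)
      exact (stronglyMeasurable_const.mul ((hXadp j).stronglyMeasurable.mono (ℱ.mono hjk))).sub
        (stronglyMeasurable_const.mul ((hZadp j).stronglyMeasurable.mono (ℱ.mono hjk)))
    have hgint : Integrable g μ :=
      integrable_finset_sum _ (fun j _ => ((hXint j).const_mul _).sub ((hZint j).const_mul _))
    have hsplit : V (k+1) = (alph η (k+1))⁻¹ • Y (k+1) + g := by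
      funext ω
      simp [hV, hg, smul_eq_mul]
    have h1 : μ[V (k+1) | ℱ k] =ᵐ[μ] (alph η (k+1))⁻¹ • μ[Y (k+1) | ℱ k] + g := by
      rw [hsplit]
      refine (condExp_add ((hYint (k+1)).smul _) hgint (ℱ k)).trans ?_
      refine EventuallyEq.add (condExp_smul _ _ _) ?_
      rw [condExp_of_stronglyMeasurable (ℱ.le k) hgadp hgint]
    have h1η : (0:ℝ) < 1 + η k := by linarith [hηnn k]
    have hkey : (alph η (k+1))⁻¹ * (1 + η k) = (alph η k)⁻¹ := by
      rw [hαsucc k, mul_inv, mul_assoc, inv_mul_cancel₀ h1η.ne', mul_one]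
    filter_upwards [h1, hrec k] with ω h1ω h2ω
    rw [h1ω]
    simp only [Pi.add_apply, Pi.smul_apply, smul_eq_mul]
    have hc : (0:ℝ) ≤ (alph η (k+1))⁻¹ := inv_nonneg.2 (hαpos _).le
    calc (alph η (k+1))⁻¹ * (μ[Y (k + 1) | ℱ k]) ω + g ω
        ≤ (alph η (k+1))⁻¹ * ((1 + η k) * Y k ω - X k ω + Z k ω) + g ω :=
          add_le_add_left (mul_le_mul_of_nonneg_left h2ω hc) _
      _ = V k ω := by
          simp only [hg, hV]
          rw [Finset.sum_range_succ]
          linear_combination (Y k ω) * hkey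
  have hGadp : ∀ k, StronglyMeasurable[ℱ k] (G k) := by
    intro k
    refine Finset.stronglyMeasurable_fun_sum _ (fun j hj => ?_)
    exact stronglyMeasurable_const.mul ((hZadp j).stronglyMeasurable.mono (ℱ.mono (Nat.lt_succ_iff.1 (Finset.mem_range.1 hj))))
  have hGmono : ∀ k ω, G k ω ≤ G (k+1) ω := by
    intro k ω
    rw [hG]
    simp only
    rw [Finset.sum_range_succ (n := k+1)]
    have : 0 ≤ (alph η (k+1+1))⁻¹ * Z (k+1) ω :=
      mul_nonneg (inv_nonneg.2 (hαpos _).le) (hZnn _ ω)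
    linarith
  have hGm : ∀ ω, Monotone (fun k => G k ω) := fun ω =>
    monotone_nat_of_le_succ (fun k => hGmono k ω)
  have key : ∀ n : ℕ, ∀ᵐ ω ∂μ,
      (∀ k, G k ω ≤ (n:ℝ)) → ∃ L, Tendsto (fun k => V k ω) atTop (𝓝 L) := by
    intro n
    set c : ℝ := (n:ℝ) with hc
    have hs : ∀ k, MeasurableSet[ℱ k] {ω | G k ω ≤ c} :=
      fun k => measurableSet_le (hGadp k).measurable measurable_const
    have hWadp : ∀ k, StronglyMeasurable[ℱ k] (W V G c k) := by
      intro k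
      induction k with
      | zero => exact hVadp 0
      | succ k ih =>
        rw [W_succ]
        exact ((hVadp (k+1)).indicator (ℱ.mono (Nat.le_succ k) _ (hs k))).add
          ((ih.mono (ℱ.mono (Nat.le_succ k))).indicator (ℱ.mono (Nat.le_succ k) _ (hs k).compl))
    have hWint : ∀ k, Integrable (W V G c k) μ := by
      intro k
      induction k with
      | zero => exact hVint 0
      | succ k ih =>
        rw [W_succ]
        exact ((hVint (k+1)).indicator (ℱ.le k _ (hs k))).add
          (ih.indicator (ℱ.le k _ (hs k).compl))
    have hWVk : ∀ k ω, G k ω ≤ c → W V G c k ω = V k ω := fun k ω h =>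
      W_eq V G c k ω (fun j hj => le_trans (hGm ω hj.le) h)
    have hWcond : ∀ k, μ[W V G c (k+1) | ℱ k] ≤ᵐ[μ] W V G c k := by
      intro k
      have heq : μ[W V G c (k+1) | ℱ k] =ᵐ[μ]
          {ω | G k ω ≤ c}.indicator (μ[V (k+1) | ℱ k])
          + {ω | G k ω ≤ c}ᶜ.indicator (W V G c k) := by
        rw [W_succ]
        refine (condExp_add ((hVint (k+1)).indicator (ℱ.le k _ (hs k)))
          ((hWint k).indicator (ℱ.le k _ (hs k).compl)) (ℱ k)).trans ?_
        refine EventuallyEq.add (condExp_indicator (hVint (k+1)) (hs k)) ?_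
        rw [condExp_of_stronglyMeasurable (ℱ.le k)
          ((hWadp k).indicator (hs k).compl) ((hWint k).indicator (ℱ.le k _ (hs k).compl))]
      filter_upwards [heq, hVcond k] with ω h1ω h2ω
      rw [h1ω]
      simp only [Pi.add_apply]
      by_cases hω : G k ω ≤ c
      · have hmem : ω ∈ {ω | G k ω ≤ c} := hω
        rw [Set.indicator_of_mem hmem, Set.indicator_of_notMem (by simpa using hω),
          hWVk k ω hω]
        simpa using h2ω
      · have hmem : ω ∉ {ω | G k ω ≤ c} := hω
        rw [Set.indicator_of_notMem hmem, Set.indicator_of_mem (by simpa using hω)]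
        simp
    have hsup : Supermartingale (W V G c) ℱ μ :=
      supermartingale_nat (fun k => hWadp k) hWint hWcond
    have hcnn : (0:ℝ) ≤ c := Nat.cast_nonneg n
    have hWlb : ∀ k ω, -c ≤ W V G c k ω := by
      intro k ω
      induction k with
      | zero =>
        have h0 : W V G c 0 ω = Y 0 ω := by simp [RSaux.W, hV, alph]
        have hy : (0:ℝ) ≤ Y 0 ω := hYnn 0 ω
        rw [h0]; linarith
      | succ k ih =>
        by_cases hω : G k ω ≤ c
        · have hW : W V G c (k+1) ω = V (k+1) ω := by simp [RSaux.W, hω]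
          rw [hW]
          have h1 : ∀ j ∈ Finset.range (k+1),
              -((alph η (j+1))⁻¹ * Z j ω)
                ≤ (alph η (j+1))⁻¹ * X j ω - (alph η (j+1))⁻¹ * Z j ω := by
            intro j _
            have := mul_nonneg (inv_nonneg.2 (hαpos (j+1)).le) (hXnn j ω)
            linarith
          have h2 := Finset.sum_le_sum h1
          rw [Finset.sum_neg_distrib] at h2
          have h3 : (0:ℝ) ≤ (alph η (k+1))⁻¹ * Y (k+1) ω :=
            mul_nonneg (inv_nonneg.2 (hαpos _).le) (hYnn _ ω)
          have h4 : -G k ω ≤ V (k+1) ω := by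
            show -(∑ j ∈ Finset.range (k+1), (alph η (j+1))⁻¹ * Z j ω)
              ≤ (alph η (k+1))⁻¹ * Y (k+1) ω
                + ∑ j ∈ Finset.range (k+1),
                  ((alph η (j+1))⁻¹ * X j ω - (alph η (j+1))⁻¹ * Z j ω)
            linarith [h2, h3]
          have h5 : G k ω ≤ c := hω
          linarith
        · have hW : W V G c (k+1) ω = W V G c k ω := by simp [RSaux.W, hω]
          rw [hW]; exact ih
    set B : ℝ := ∫ ω, W V G c 0 ω ∂μ + 2*c with hB
    have hWint0 : ∀ k, ∫ ω, W V G c k ω ∂μ ≤ ∫ ω, W V G c 0 ω ∂μ := by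
      intro k
      have h := hsup.2.1 0 k (Nat.zero_le k)
      calc ∫ ω, W V G c k ω ∂μ = ∫ ω, (μ[W V G c k | ℱ 0]) ω ∂μ :=
            (integral_condExp (ℱ.le 0)).symm
        _ ≤ ∫ ω, W V G c 0 ω ∂μ := integral_mono_ae integrable_condExp (hWint 0) h
    have hWsn : ∀ k, eLpNorm (W V G c k) 1 μ ≤ ENNReal.ofReal B := by
      intro k
      rw [eLpNorm_one_eq_lintegral_enorm, ← ofReal_integral_norm_eq_lintegral_enorm (hWint k)]
      refine ENNReal.ofReal_le_ofReal ?_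
      have habs : ∀ ω, ‖W V G c k ω‖ ≤ W V G c k ω + 2*c := by
        intro ω
        have := hWlb k ω
        rw [Real.norm_eq_abs]
        rcases le_or_gt 0 (W V G c k ω) with h | h
        · rw [abs_of_nonneg h]; linarith
        · rw [abs_of_neg h]; linarith
      calc ∫ ω, ‖W V G c k ω‖ ∂μ ≤ ∫ ω, (W V G c k ω + 2*c) ∂μ :=
            integral_mono (hWint k).norm ((hWint k).add (integrable_const _)) habs
        _ = ∫ ω, W V G c k ω ∂μ + 2*c := by
            rw [integral_add (hWint k) (integrable_const _), integral_const]
            simp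
        _ ≤ B := by rw [hB]; linarith [hWint0 k]
    have hconv : ∀ᵐ ω ∂μ, ∃ L, Tendsto (fun k => (-(W V G c)) k ω) atTop (𝓝 L) := by
      refine (hsup.neg).exists_ae_tendsto_of_bdd (R := B.toNNReal) (fun k => ?_)
      have : eLpNorm ((-(W V G c)) k) 1 μ = eLpNorm (W V G c k) 1 μ := by
        simp [eLpNorm_neg]
      rw [this]
      simpa [ENNReal.ofReal] using hWsn k
    filter_upwards [hconv] with ω hω hGn
    obtain ⟨L, hL⟩ := hω
    refine ⟨-L, ?_⟩
    have h1 : Tendsto (fun k => W V G c k ω) atTop (𝓝 (-L)) := by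
      have := hL.neg
      simpa using this
    exact h1.congr (fun k => hWVk k ω (hGn k))
  -- combine everything
  obtain ⟨αl, hαl1, hαlt⟩ := hαlim
  filter_upwards [hZsum, ae_all_iff.2 key] with ω hZω hkey
  -- summability of the rescaled Z
  have hZtnn : ∀ j, (0:ℝ) ≤ (alph η (j+1))⁻¹ * Z j ω :=
    fun j => mul_nonneg (inv_nonneg.2 (hαpos _).le) (hZnn j ω)
  have hZt : Summable (fun j => (alph η (j+1))⁻¹ * Z j ω) := by
    refine Summable.of_nonneg_of_le hZtnn (fun j => ?_) hZω
    have hinv : (alph η (j+1))⁻¹ ≤ 1 := by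
      rw [inv_le_one_iff₀]; right; exact hα1 _
    have hz : (0:ℝ) ≤ Z j ω := hZnn j ω
    nlinarith
  obtain ⟨n, hn⟩ := exists_nat_ge (∑' j, (alph η (j+1))⁻¹ * Z j ω)
  have hGn : ∀ k, G k ω ≤ (n:ℝ) := by
    intro k
    refine le_trans ?_ hn
    exact Summable.sum_le_tsum _ (fun j _ => hZtnn j) hZt
  obtain ⟨L, hL⟩ := hkey n hGn
  -- bound for the partial sums of rescaled X
  obtain ⟨B, hB⟩ := hL.bddAbove_range
  have hBle : ∀ k, V k ω ≤ B := fun k => hB ⟨k, rfl⟩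
  have hXtnn : ∀ j, (0:ℝ) ≤ (alph η (j+1))⁻¹ * X j ω :=
    fun j => mul_nonneg (inv_nonneg.2 (hαpos _).le) (hXnn j ω)
  have hSXle : ∀ k, ∑ j ∈ Finset.range k, (alph η (j+1))⁻¹ * X j ω
      ≤ B + ∑' j, (alph η (j+1))⁻¹ * Z j ω := by
    intro k
    have hVk : V k ω = (alph η k)⁻¹ * Y k ω
        + (∑ j ∈ Finset.range k, (alph η (j+1))⁻¹ * X j ω)
        - ∑ j ∈ Finset.range k, (alph η (j+1))⁻¹ * Z j ω := by
      show (alph η k)⁻¹ * Y k ω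
          + ∑ j ∈ Finset.range k, ((alph η (j+1))⁻¹ * X j ω - (alph η (j+1))⁻¹ * Z j ω) = _
      rw [Finset.sum_sub_distrib]
      ring
    have hy : (0:ℝ) ≤ (alph η k)⁻¹ * Y k ω :=
      mul_nonneg (inv_nonneg.2 (hαpos _).le) (hYnn k ω)
    have hsz : ∑ j ∈ Finset.range k, (alph η (j+1))⁻¹ * Z j ω
        ≤ ∑' j, (alph η (j+1))⁻¹ * Z j ω := Summable.sum_le_tsum _ (fun j _ => hZtnn j) hZt
    have := hBle k
    rw [hVk] at this
    linarith
  have hXt : Summable (fun j => (alph η (j+1))⁻¹ * X j ω) :=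
    summable_of_sum_range_le hXtnn hSXle
  have hXsummable : Summable (fun j => X j ω) := by
    refine Summable.of_nonneg_of_le (fun j => hXnn j ω) (fun j => ?_) (hXt.mul_left A)
    have h1 : alph η (j+1) * ((alph η (j+1))⁻¹ * X j ω) = X j ω := by
      rw [← mul_assoc, mul_inv_cancel₀ (hαpos _).ne', one_mul]
    calc X j ω = alph η (j+1) * ((alph η (j+1))⁻¹ * X j ω) := h1.symm
      _ ≤ A * ((alph η (j+1))⁻¹ * X j ω) :=
        mul_le_mul_of_nonneg_right (hαle _) (hXtnn j)
  refine ⟨hXsummable, ?_⟩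
  -- convergence of Y
  have hSX : Tendsto (fun k => ∑ j ∈ Finset.range k, (alph η (j+1))⁻¹ * X j ω) atTop
      (𝓝 (∑' j, (alph η (j+1))⁻¹ * X j ω)) := hXt.hasSum.tendsto_sum_nat
  have hSZ : Tendsto (fun k => ∑ j ∈ Finset.range k, (alph η (j+1))⁻¹ * Z j ω) atTop
      (𝓝 (∑' j, (alph η (j+1))⁻¹ * Z j ω)) := hZt.hasSum.tendsto_sum_nat
  have hYa : Tendsto (fun k => (alph η k)⁻¹ * Y k ω) atTop
      (𝓝 (L - (∑' j, (alph η (j+1))⁻¹ * X j ω) + ∑' j, (alph η (j+1))⁻¹ * Z j ω)) := by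
    refine ((hL.sub hSX).add hSZ).congr (fun k => ?_)
    show V k ω - _ + _ = _
    show (alph η k)⁻¹ * Y k ω
        + ∑ j ∈ Finset.range k, ((alph η (j+1))⁻¹ * X j ω - (alph η (j+1))⁻¹ * Z j ω)
        - _ + _ = _
    rw [Finset.sum_sub_distrib]
    ring
  refine ⟨αl * (L - (∑' j, (alph η (j+1))⁻¹ * X j ω) + ∑' j, (alph η (j+1))⁻¹ * Z j ω), ?_⟩
  refine (hαlt.mul hYa).congr (fun k => ?_)
  exact mul_inv_cancel_left₀ (hαpos k).ne' (Y k ω)
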